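/- arXiv:1409.4612 — 2 statements merged into one kernel-verified Lean document; each statement's English description precedes it below -/
import Mathlib

section
/- Let d ≥ 3, let e₁ = (1,0,…,0) ∈ ℝ^d, c_k = 2^k e₁, C_k = Q(c_k, 1/(2k)), and for τ > 3 let d_n = c_n + (τ/n) e₁ and D_n = Q(d_n, 1/(2n)). There exists a constant C > 0, depending only on d, such that: for every τ > 3 and every integer n ≥ 2 with (τ+1)/n ≤ 1/2, and every x ∈ D_n, one has Σ_{k ≥ 2, k ≠ n} k² ∫_{C_k} |z − x|^{2−d} dz ≤ C (n + 1) 2^{n(2−d)}. -/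
open MeasureTheory
open scoped ENNReal

noncomputable section

/-- `ℝ^d` as a Euclidean space. -/
abbrev Rd (d : ℕ) := EuclideanSpace ℝ (Fin d)

/-- The open cube `Q(c,r) = {y : max_i |c_i - y_i| < r}`. -/
def cubeSet {d : ℕ} (c : Rd d) (r : ℝ) : Set (Rd d) := {y | ∀ i, |c i - y i| < r}

/-- The first standard basis vector `e₁ = (1,0,…,0)`. -/
def e1 (d : ℕ) [NeZero d] : Rd d := EuclideanSpace.single 0 1

/-- The center `c_n = 2^n e₁`. -/
def cn (d : ℕ) [NeZero d] (n : ℕ) : Rd d := (2 : ℝ) ^ n • e1 d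

/-- The cube `C_n = Q(c_n, 1/(2n))`. -/
def Ck (d : ℕ) [NeZero d] (n : ℕ) : Set (Rd d) := cubeSet (cn d n) (1 / (2 * n))

/-- The shifted center `d_n = c_n + (τ/n) e₁`. -/
def dn (d : ℕ) [NeZero d] (τ : ℝ) (n : ℕ) : Rd d := cn d n + (τ / n) • e1 d

/-- The shifted cube `D_n = Q(d_n, 1/(2n))`. -/
def Dn (d : ℕ) [NeZero d] (τ : ℝ) (n : ℕ) : Set (Rd d) := cubeSet (dn d τ n) (1 / (2 * n))

lemma coord_le_norm {d : ℕ} (v : Rd d) (i : Fin d) : |v i| ≤ ‖v‖ := by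
  rw [EuclideanSpace.norm_eq, ← Real.sqrt_sq_eq_abs]
  apply Real.sqrt_le_sqrt
  calc (v i)^2 = ‖v i‖^2 := by rw [Real.norm_eq_abs, sq_abs]
  _ ≤ ∑ j, ‖v j‖^2 :=
    Finset.single_le_sum (f := fun j => ‖v j‖^2) (fun j _ => by positivity) (Finset.mem_univ i)

lemma cube_vol {d : ℕ} (c : Rd d) (r : ℝ) :
    volume (cubeSet c r) = ENNReal.ofReal (2 * r) ^ d := by
  have happ : ∀ (y : Rd d) (i : Fin d), (MeasurableEquiv.toLp 2 (Fin d → ℝ)).symm y i = y i :=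
    fun y i => rfl
  have hset : cubeSet c r = (MeasurableEquiv.toLp 2 (Fin d → ℝ)).symm ⁻¹'
      (Set.univ.pi fun i => Set.Ioo (c i - r) (c i + r)) := by
    ext y
    simp only [cubeSet, Set.mem_setOf_eq, Set.mem_preimage, Set.mem_pi, Set.mem_univ,
      true_implies, Set.mem_Ioo, happ]
    refine forall_congr' fun i => ?_
    rw [abs_lt]
    constructor <;> intro h <;> constructor <;> linarith [h.1, h.2]
  rw [hset, (EuclideanSpace.volume_preserving_symm_measurableEquiv_toLp (Fin d)).measure_preimage
    (MeasurableSet.univ_pi fun i => measurableSet_Ioo).nullMeasurableSet]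
  rw [volume_pi_pi]
  have : ∀ i : Fin d, volume (Set.Ioo (c i - r) (c i + r)) = ENNReal.ofReal (2 * r) := by
    intro i; rw [Real.volume_Ioo]; congr 1; ring
  simp [this, Finset.prod_const]

lemma cn_zero (d : ℕ) [NeZero d] (k : ℕ) : cn d k 0 = (2:ℝ)^k := by
  simp [cn, e1, EuclideanSpace.single_apply]

lemma dn_zero (d : ℕ) [NeZero d] (τ : ℝ) (n : ℕ) : dn d τ n 0 = (2:ℝ)^n + τ/n := by
  simp [dn, cn, e1, EuclideanSpace.single_apply]

lemma gap {k n : ℕ} (hn : 2 ≤ n) (hkn : k < n) : (2:ℝ)^n/4 + 1 ≤ 2^n - 2^k := by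
  obtain ⟨m, rfl⟩ : ∃ m, n = m + 2 := ⟨n - 2, by omega⟩
  have h1 : (2:ℝ)^k ≤ 2^(m+1) := pow_le_pow_right₀ (by norm_num) (by omega)
  have h2 : (1:ℝ) ≤ 2^m := one_le_pow₀ (by norm_num)
  have h3 : (2:ℝ)^(m+2) = 4 * 2^m := by ring
  have h4 : (2:ℝ)^(m+1) = 2 * 2^m := by ring
  nlinarith

lemma key_norm {d : ℕ} [NeZero d] {τ : ℝ} {n k : ℕ} {x z : Rd d}
    (hτ : 3 < τ) (hn : 2 ≤ n) (hτn : (τ + 1) / n ≤ 1 / 2)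
    (hx : x ∈ Dn d τ n) (hk : 2 ≤ k) (hkn : k ≠ n) (hz : z ∈ Ck d k) :
    (2:ℝ)^(max k n)/4 ≤ ‖z - x‖ := by
  have hx0 : |dn d τ n 0 - x 0| < 1/(2*n) := hx 0
  have hz0 : |cn d k 0 - z 0| < 1/(2*k) := hz 0
  rw [dn_zero] at hx0
  rw [cn_zero] at hz0
  have hn' : (2:ℝ) ≤ n := by exact_mod_cast hn
  have hk' : (2:ℝ) ≤ k := by exact_mod_cast hk
  have hτn' : τ / n ≤ 1/2 := by
    have h1 : τ/n + 1/n ≤ 1/2 := by rw [← add_div]; exact hτn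
    have h2 : 0 < 1/(n:ℝ) := by positivity
    linarith
  have hτpos : 0 ≤ τ / n := by positivity
  have h2n : 1/(2*(n:ℝ)) ≤ 1/4 := by
    rw [div_le_div_iff₀ (by linarith) (by norm_num)]; linarith
  have h2k : 1/(2*(k:ℝ)) ≤ 1/4 := by
    rw [div_le_div_iff₀ (by linarith) (by norm_num)]; linarith
  have habs : |z 0 - x 0| ≤ ‖z - x‖ := by
    have h := coord_le_norm (z - x) 0
    simpa using h
  have hx0' := abs_lt.mp hx0
  have hz0' := abs_lt.mp hz0
  rcases lt_or_gt_of_ne hkn with h | h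
  · rw [max_eq_right h.le]
    have hg := gap hn h
    calc (2:ℝ)^n/4 ≤ x 0 - z 0 := by linarith [hx0'.1, hx0'.2, hz0'.1, hz0'.2]
    _ ≤ |z 0 - x 0| := by rw [abs_sub_comm]; exact le_abs_self _
    _ ≤ ‖z - x‖ := habs
  · rw [max_eq_left h.le]
    have hg := gap (by omega) h
    calc (2:ℝ)^k/4 ≤ z 0 - x 0 := by linarith [hx0'.1, hx0'.2, hz0'.1, hz0'.2]
    _ ≤ |z 0 - x 0| := le_abs_self _
    _ ≤ ‖z - x‖ := habs

lemma rpow_max_eq {d m : ℕ} (hd : 3 ≤ d) :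
    ((2:ℝ)^m/4) ^ ((2:ℝ) - (d:ℝ)) =
      (2:ℝ)^((2:ℝ)*((d:ℝ)-2)) * (2:ℝ)^((m:ℝ)*((2:ℝ)-(d:ℝ))) := by
  have h4 : (2:ℝ)^(2:ℝ) = 4 := by
    rw [show (2:ℝ) = ((2:ℕ):ℝ) from by norm_num, Real.rpow_natCast]; norm_num
  have h1 : (2:ℝ)^m/4 = (2:ℝ) ^ ((m:ℝ) - 2) := by
    rw [Real.rpow_sub (by norm_num), Real.rpow_natCast, h4]
  rw [h1, ← Real.rpow_mul (by norm_num), ← Real.rpow_add (by norm_num)]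
  congr 1; ring

lemma term_bound {d : ℕ} [NeZero d] (hd : 3 ≤ d) {τ : ℝ} {n k : ℕ} {x : Rd d}
    (hτ : 3 < τ) (hn : 2 ≤ n) (hτn : (τ + 1) / n ≤ 1 / 2)
    (hx : x ∈ Dn d τ n) (hk : 2 ≤ k) (hkn : k ≠ n) :
    (k : ℝ≥0∞) ^ 2 * (∫⁻ z in Ck d k, ENNReal.ofReal (‖z - x‖ ^ ((2 : ℝ) - (d : ℝ))))
      ≤ ENNReal.ofReal ((2:ℝ)^((2:ℝ)*((d:ℝ)-2)) * (2:ℝ)^(((max k n : ℕ) : ℝ)*((2:ℝ)-(d:ℝ)))) := by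
  set m := max k n with hm
  have hm2 : 2 ≤ m := le_trans hk (le_max_left _ _)
  set M := (2:ℝ)^m/4 with hMdef
  have hM1 : (1:ℝ) ≤ M := by
    have h42 : (4:ℝ) ≤ 2^m := by
      calc (4:ℝ) = 2^2 := by norm_num
      _ ≤ 2^m := pow_le_pow_right₀ (by norm_num) hm2
    rw [hMdef]; linarith
  have hexp : (2:ℝ) - (d:ℝ) ≤ 0 := by
    have : (3:ℝ) ≤ (d:ℝ) := by exact_mod_cast hd
    linarith
  have hMp : (0:ℝ) < M ^ ((2:ℝ) - (d:ℝ)) := Real.rpow_pos_of_pos (by linarith) _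
  have hpt : ∀ z ∈ Ck d k, ENNReal.ofReal (‖z - x‖ ^ ((2:ℝ) - (d:ℝ)))
      ≤ ENNReal.ofReal (M ^ ((2:ℝ) - (d:ℝ))) := fun z hz =>
    ENNReal.ofReal_le_ofReal
      (Real.rpow_le_rpow_of_nonpos (by linarith) (key_norm hτ hn hτn hx hk hkn hz) hexp)
  have hint : (∫⁻ z in Ck d k, ENNReal.ofReal (‖z - x‖ ^ ((2:ℝ) - (d:ℝ))))
      ≤ ENNReal.ofReal (M ^ ((2:ℝ) - (d:ℝ))) * volume (Ck d k) := by
    rw [← setLIntegral_const]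
    exact setLIntegral_mono measurable_const hpt
  have hk2 : (2:ℝ) ≤ (k:ℝ) := by exact_mod_cast hk
  have hk0 : (0:ℝ) < k := by linarith
  have hvol : volume (Ck d k) = ENNReal.ofReal (1/(k:ℝ)) ^ d := by
    rw [Ck, cube_vol]; congr 2; field_simp
  calc (k : ℝ≥0∞)^2 * (∫⁻ z in Ck d k, ENNReal.ofReal (‖z - x‖ ^ ((2:ℝ) - (d:ℝ))))
      ≤ (k:ℝ≥0∞)^2 * (ENNReal.ofReal (M ^ ((2:ℝ)-(d:ℝ))) * ENNReal.ofReal (1/(k:ℝ)) ^ d) := by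
        rw [← hvol]; exact mul_le_mul_right hint _
  _ = ENNReal.ofReal ((k:ℝ)^2 * (M ^ ((2:ℝ)-(d:ℝ)) * (1/(k:ℝ))^d)) := by
        rw [← ENNReal.ofReal_natCast k, ← ENNReal.ofReal_pow (by positivity),
          ← ENNReal.ofReal_pow (by positivity), ← ENNReal.ofReal_mul (by positivity),
          ← ENNReal.ofReal_mul (by positivity)]
  _ ≤ ENNReal.ofReal (M ^ ((2:ℝ)-(d:ℝ))) := by
        apply ENNReal.ofReal_le_ofReal
        have h1k : (1:ℝ)/k ≤ 1 := by rw [div_le_one hk0]; linarith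
        have hle : ((1:ℝ)/k)^d ≤ ((1:ℝ)/k)^2 :=
          pow_le_pow_of_le_one (by positivity) h1k (by omega)
        have hfrac : (k:ℝ)^2 * ((1:ℝ)/k)^d ≤ 1 := by
          have heq : (k:ℝ)^2 * ((1:ℝ)/k)^2 = 1 := by field_simp
          calc (k:ℝ)^2 * ((1:ℝ)/k)^d ≤ (k:ℝ)^2 * ((1:ℝ)/k)^2 :=
                mul_le_mul_of_nonneg_left hle (by positivity)
          _ = 1 := heq
        calc (k:ℝ)^2 * (M ^ ((2:ℝ)-(d:ℝ)) * ((1:ℝ)/k)^d)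
            = ((k:ℝ)^2 * ((1:ℝ)/k)^d) * M ^ ((2:ℝ)-(d:ℝ)) := by ring
        _ ≤ 1 * M ^ ((2:ℝ)-(d:ℝ)) := mul_le_mul_of_nonneg_right hfrac hMp.le
        _ = M ^ ((2:ℝ)-(d:ℝ)) := one_mul _
  _ = ENNReal.ofReal ((2:ℝ)^((2:ℝ)*((d:ℝ)-2)) * (2:ℝ)^(((m:ℕ):ℝ)*((2:ℝ)-(d:ℝ)))) := by
        rw [hMdef, rpow_max_eq hd]

/-- there is `C > 0`, depending only on `d`, such that for every `τ > 3`,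
every `n ≥ 2` with `(τ+1)/n ≤ 1/2`, and every `x ∈ D_n`,
`∑_{k ≥ 2, k ≠ n} k² ∫_{C_k} |z-x|^{2-d} dz ≤ C (n+1) 2^{n(2-d)}`. -/
theorem statement11 (d : ℕ) [NeZero d] (hd : 3 ≤ d) :
    ∃ C > (0 : ℝ), ∀ τ : ℝ, 3 < τ → ∀ n : ℕ, 2 ≤ n → (τ + 1) / n ≤ 1 / 2 →
      ∀ x ∈ Dn d τ n,
      (∑' k : ℕ, if 2 ≤ k ∧ k ≠ n then
          (k : ℝ≥0∞) ^ 2 * (∫⁻ z in Ck d k, ENNReal.ofReal (‖z - x‖ ^ ((2 : ℝ) - (d : ℝ))))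
        else 0)
        ≤ ENNReal.ofReal (C * ((n : ℝ) + 1) * (2 : ℝ) ^ ((n : ℝ) * ((2 : ℝ) - (d : ℝ)))) := by
  classical
  set A : ℝ := (2:ℝ)^((2:ℝ)*((d:ℝ)-2)) with hA
  have hApos : 0 < A := Real.rpow_pos_of_pos (by norm_num) _
  refine ⟨2 * A, by positivity, ?_⟩
  intro τ hτ n hn hτn x hx
  set B : ℝ := (2:ℝ)^((n:ℝ)*((2:ℝ)-(d:ℝ))) with hB
  have hBpos : 0 < B := Real.rpow_pos_of_pos (by norm_num) _
  have hexp : (2:ℝ) - (d:ℝ) ≤ -1 := by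
    have : (3:ℝ) ≤ (d:ℝ) := by exact_mod_cast hd
    linarith
  set r : ℝ≥0∞ := ENNReal.ofReal ((2:ℝ)^((2:ℝ)-(d:ℝ))) with hr
  -- pointwise bound by h
  have hpoint : ∀ k : ℕ,
      (if 2 ≤ k ∧ k ≠ n then
          (k : ℝ≥0∞) ^ 2 * (∫⁻ z in Ck d k, ENNReal.ofReal (‖z - x‖ ^ ((2 : ℝ) - (d : ℝ))))
        else 0)
      ≤ (if k ≤ n then ENNReal.ofReal (A * B) else 0)
        + (if n < k then ENNReal.ofReal A * r ^ k else 0) := by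
    intro k
    by_cases hcond : 2 ≤ k ∧ k ≠ n
    · rw [if_pos hcond]
      obtain ⟨hk2, hkn⟩ := hcond
      rcases le_or_gt k n with hkle | hklt
      · rw [if_pos hkle, if_neg (by omega)]
        have ht := term_bound hd hτ hn hτn hx hk2 hkn
        rw [max_eq_right hkle] at ht
        simpa [hA, hB] using ht
      · rw [if_neg (by omega), if_pos hklt, zero_add]
        have ht := term_bound hd hτ hn hτn hx hk2 hkn
        rw [max_eq_left hklt.le] at ht
        have hre : ENNReal.ofReal (A * (2:ℝ)^((k:ℝ)*((2:ℝ)-(d:ℝ))))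
            = ENNReal.ofReal A * r ^ k := by
          rw [ENNReal.ofReal_mul hApos.le, hr,
            ← ENNReal.ofReal_pow (Real.rpow_nonneg (by norm_num) _)]
          congr 1
          rw [← Real.rpow_natCast ((2:ℝ)^((2:ℝ)-(d:ℝ))) k, ← Real.rpow_mul (by norm_num)]
          congr 1; ring
        rw [← hre]
        exact ht
    · rw [if_neg hcond]
      exact zero_le
  refine le_trans (ENNReal.tsum_le_tsum hpoint) ?_
  rw [ENNReal.tsum_add]
  -- first sum
  have hS1 : (∑' k : ℕ, if k ≤ n then ENNReal.ofReal (A * B) else 0)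
      = ((n:ℝ≥0∞) + 1) * ENNReal.ofReal (A * B) := by
    rw [tsum_eq_sum (s := Finset.range (n+1))
      (by intro k hk
          have hkn : ¬ (k ≤ n) := fun h => hk (Finset.mem_range.mpr (by omega))
          rw [if_neg hkn])]
    rw [Finset.sum_congr rfl (fun k hk => if_pos (by simpa using Nat.lt_succ_iff.mp (Finset.mem_range.mp hk)))]
    rw [Finset.sum_const, Finset.card_range, nsmul_eq_mul]
    congr 1
    push_cast
    ring
  -- second sum
  have hr_half : r ≤ 2⁻¹ := by
    rw [hr, show ((2:ℝ≥0∞))⁻¹ = ENNReal.ofReal (2:ℝ)⁻¹ from by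
      rw [ENNReal.ofReal_inv_of_pos (by norm_num)]; norm_num]
    apply ENNReal.ofReal_le_ofReal
    calc (2:ℝ)^((2:ℝ)-(d:ℝ)) ≤ (2:ℝ)^(-1:ℝ) :=
          Real.rpow_le_rpow_of_exponent_le (by norm_num) hexp
    _ = (2:ℝ)⁻¹ := by rw [Real.rpow_neg_one]
  have hrn : r ^ n = ENNReal.ofReal B := by
    rw [hr, ← ENNReal.ofReal_pow (Real.rpow_nonneg (by norm_num) _)]
    congr 1
    rw [← Real.rpow_natCast ((2:ℝ)^((2:ℝ)-(d:ℝ))) n, ← Real.rpow_mul (by norm_num), hB]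
    congr 1; ring
  have hS2 : (∑' k : ℕ, if n < k then ENNReal.ofReal A * r ^ k else 0)
      ≤ ENNReal.ofReal (A * B) := by
    have hinj : Function.Injective (fun j : ℕ => j + (n+1)) := add_left_injective (n+1)
    have hsupp : Function.support (fun k : ℕ => if n < k then ENNReal.ofReal A * r ^ k else 0)
        ⊆ Set.range (fun j : ℕ => j + (n+1)) := by
      intro k hk
      have : n < k := by
        by_contra hc
        simp [if_neg hc] at hk
      exact ⟨k - (n+1), by show k - (n+1) + (n+1) = k; omega⟩
    rw [← hinj.tsum_eq hsupp]
    have heq : ∀ j : ℕ, (if n < j + (n+1) then ENNReal.ofReal A * r ^ (j + (n+1)) else 0)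
        = (ENNReal.ofReal A * r ^ (n+1)) * r ^ j := by
      intro j
      rw [if_pos (by omega), pow_add]
      ring
    rw [tsum_congr heq, ENNReal.tsum_mul_left, ENNReal.tsum_geometric]
    have hinv : (1 - r)⁻¹ ≤ 2 := by
      have h1 : (2:ℝ≥0∞)⁻¹ ≤ 1 - r := by
        calc (2:ℝ≥0∞)⁻¹ = 1 - 2⁻¹ := by
              rw [ENNReal.one_sub_inv_two]
        _ ≤ 1 - r := tsub_le_tsub_left hr_half 1
      calc (1 - r)⁻¹ ≤ ((2:ℝ≥0∞)⁻¹)⁻¹ := ENNReal.inv_le_inv' h1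
      _ = 2 := by rw [inv_inv]
    calc ENNReal.ofReal A * r ^ (n+1) * (1 - r)⁻¹
        ≤ ENNReal.ofReal A * r ^ (n+1) * 2 := mul_le_mul_right hinv _
    _ = ENNReal.ofReal A * r ^ n * (r * 2) := by ring
    _ ≤ ENNReal.ofReal A * r ^ n * (2⁻¹ * 2) := by
        exact mul_le_mul_right (mul_le_mul_left hr_half 2) _
    _ = ENNReal.ofReal A * r ^ n := by
        rw [ENNReal.inv_mul_cancel (by norm_num) (by norm_num), mul_one]
    _ = ENNReal.ofReal (A * B) := by
        rw [hrn, ← ENNReal.ofReal_mul hApos.le]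
  calc (∑' k : ℕ, if k ≤ n then ENNReal.ofReal (A * B) else 0)
        + (∑' k : ℕ, if n < k then ENNReal.ofReal A * r ^ k else 0)
      ≤ ((n:ℝ≥0∞) + 1) * ENNReal.ofReal (A * B) + ENNReal.ofReal (A * B) := by
        rw [hS1]; exact add_le_add_right hS2 _
  _ ≤ (2 * ((n:ℝ≥0∞) + 1)) * ENNReal.ofReal (A * B) := by
        conv_rhs => rw [two_mul, add_mul]
        refine add_le_add_right ?_ _
        conv_lhs => rw [← one_mul (ENNReal.ofReal (A * B))]
        exact mul_le_mul_left (by simp) _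
  _ = ENNReal.ofReal (2 * A * ((n:ℝ) + 1) * B) := by
        rw [show ((n:ℝ≥0∞) + 1) = ENNReal.ofReal ((n:ℝ) + 1) from by
          rw [ENNReal.ofReal_add (by positivity) zero_le_one, ENNReal.ofReal_natCast,
            ENNReal.ofReal_one]]
        rw [show (2:ℝ≥0∞) = ENNReal.ofReal (2:ℝ) from by norm_num]
        rw [← ENNReal.ofReal_mul (by norm_num), ← ENNReal.ofReal_mul (by positivity)]
        congr 1
        ring
end
end

section
/- Let d ≥ 3, let e₁ = (1,0,…,0) ∈ ℝ^d, c_n = 2ⁿ e₁, C_n = Q(c_n, 1/(2n)); for τ > 3 let d_n = c_n + (τ/n) e₁, D_n = Q(d_n, 1/(2n)), and S_n = {x ∈ ℝ^d : √d/n < |x − c_n| < 1 and x₁ < 2ⁿ}. Then for every τ > 3 there exist a constant c > 0 and N ∈ ℕ, depending only on d and τ, such that for every integer n ≥ N and every real μ ≥ 1, the function a_n(x) = n^d (μ χ_{C_n}(x) − χ_{D_n}(x)) satisfies ∫_{S_n} sup_{0 < t ≤ 1} (P_t * a_n)(x) dx ≥ c (μ − 1) ln n. -/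
set_option maxHeartbeats 1000000


open MeasureTheory
open scoped RealInnerProductSpace
open scoped ENNReal

noncomputable section

/-- The Gauss–Weierstrass kernel `P_t(x) = (4πt)^{-d/2} exp(-|x|²/(4t))`. -/
def gauss (d : ℕ) (t : ℝ) (x : Rd d) : ℝ :=
  (4 * Real.pi * t) ^ (-(d : ℝ) / 2) * Real.exp (-‖x‖ ^ 2 / (4 * t))

/-- The region `S_n = {x : √d/n < |x - c_n| < 1, x₁ < 2ⁿ}`. -/
def Sn (d : ℕ) [NeZero d] (n : ℕ) : Set (Rd d) :=
  {x | Real.sqrt d / n < ‖x - cn d n‖ ∧ ‖x - cn d n‖ < 1 ∧ x 0 < (2 : ℝ) ^ n}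

/-- The function `a_n = n^d (μ χ_{C_n} - χ_{D_n})`. -/
def aFun (d : ℕ) [NeZero d] (τ : ℝ) (n : ℕ) (μ : ℝ) (x : Rd d) : ℝ :=
  (n : ℝ) ^ d * (μ * (Ck d n).indicator (fun _ => (1 : ℝ)) x -
    (Dn d τ n).indicator (fun _ => (1 : ℝ)) x)

lemma cn_apply_zero (d : ℕ) [NeZero d] (n : ℕ) : cn d n 0 = (2:ℝ)^n := by
  simp [cn, e1, PiLp.smul_apply, EuclideanSpace.single_apply]

lemma smul_e1_apply (d : ℕ) [NeZero d] (a : ℝ) (i : Fin d) :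
    (a • e1 d) i = if i = 0 then a else 0 := by
  simp [e1, PiLp.smul_apply, EuclideanSpace.single_apply]

lemma mem_Dn_iff {d : ℕ} [NeZero d] {τ : ℝ} {n : ℕ} (y : Rd d) :
    y + (τ/n) • e1 d ∈ Dn d τ n ↔ y ∈ Ck d n := by
  constructor <;> intro h i <;> have := h i
  · simpa [Dn, dn, cubeSet, PiLp.add_apply] using this
  · simpa [Dn, dn, cubeSet, PiLp.add_apply] using this

lemma inner_e1 {d : ℕ} [NeZero d] (u : Rd d) : (inner ℝ u (e1 d) : ℝ) = u 0 := by
  simp [e1, EuclideanSpace.inner_single_right]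

lemma norm_e1 (d : ℕ) [NeZero d] : ‖e1 d‖ = 1 := by
  simp [e1]

lemma norm_shift {d : ℕ} [NeZero d] {τ : ℝ} {n : ℕ} (hn : 1 ≤ n) (hτ : 1 ≤ τ)
    {x y : Rd d} (hx : x 0 < (2:ℝ)^n) (hy : y ∈ Ck d n) :
    ‖x - y‖ ≤ ‖x - y - (τ/n) • e1 d‖ := by
  have hnp : (0:ℝ) < n := by exact_mod_cast hn
  have hτn : (0:ℝ) < τ/n := by positivity
  have hsq : ‖x - y - (τ/n) • e1 d‖^2
      = ‖x - y‖^2 - 2 * ((τ/n) * ((x - y) 0)) + (τ/n)^2 := by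
    rw [norm_sub_sq_real, real_inner_smul_right, inner_e1, norm_smul, norm_e1]
    rw [mul_one, Real.norm_eq_abs, sq_abs]
  have hy0 : |cn d n 0 - y 0| < 1/(2*n) := hy 0
  rw [cn_apply_zero d n] at hy0
  have h1 : x 0 - y 0 < 1/(2*n) := by
    have := (abs_lt.mp hy0).2
    linarith
  have hsub : (x - y) 0 = x 0 - y 0 := rfl
  have key : ‖x - y‖^2 ≤ ‖x - y - (τ/n) • e1 d‖^2 := by
    rw [hsq, hsub]
    have h2 : x 0 - y 0 ≤ τ/(2*n) := by
      have h5 : (1:ℝ)/(2*n) ≤ τ/(2*n) := by gcongr <;> linarith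
      linarith
    have h3 : τ/n * (x 0 - y 0) ≤ τ/n * (τ/(2*n)) :=
      mul_le_mul_of_nonneg_left h2 hτn.le
    have h4 : τ/n * (τ/(2*n)) = (τ/n)^2/2 := by field_simp
    nlinarith
  nlinarith [norm_nonneg (x - y - (τ/n) • e1 d), norm_nonneg (x - y)]

lemma gauss_pos {d : ℕ} {t : ℝ} (ht : 0 < t) (x : Rd d) : 0 < gauss d t x := by
  unfold gauss
  have h4 : 0 < 4 * Real.pi * t := by positivity
  exact mul_pos (Real.rpow_pos_of_pos h4 _) (Real.exp_pos _)

lemma gauss_le {d : ℕ} {t : ℝ} (ht : 0 < t) (x : Rd d) :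
    gauss d t x ≤ (4 * Real.pi * t) ^ (-(d : ℝ) / 2) := by
  unfold gauss
  have h4 : (0:ℝ) < 4 * Real.pi * t := by positivity
  have : Real.exp (-‖x‖ ^ 2 / (4 * t)) ≤ 1 := by
    rw [Real.exp_le_one_iff]
    have hx : (0:ℝ) ≤ ‖x‖^2 := by positivity
    have ht4 : (0:ℝ) < 4 * t := by linarith
    rw [div_nonpos_iff]; right; constructor <;> linarith
  nlinarith [Real.rpow_pos_of_pos h4 (-(d:ℝ)/2)]

lemma gauss_mono {d : ℕ} {t : ℝ} (ht : 0 < t) {x y : Rd d} (h : ‖x‖ ≤ ‖y‖) :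
    gauss d t y ≤ gauss d t x := by
  unfold gauss
  have h4 : (0:ℝ) < 4 * Real.pi * t := by positivity
  have hp := Real.rpow_pos_of_pos h4 (-(d:ℝ)/2)
  have hx : (0:ℝ) ≤ ‖x‖ := norm_nonneg _
  have he : Real.exp (-‖y‖ ^ 2 / (4 * t)) ≤ Real.exp (-‖x‖ ^ 2 / (4 * t)) := by
    apply Real.exp_le_exp.mpr
    have h2 : -‖y‖^2 ≤ -‖x‖^2 := by nlinarith
    have ht4 : (0:ℝ) < 4*t := by linarith
    gcongr
  nlinarith [Real.exp_pos (-‖y‖^2/(4*t))]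

lemma gauss_cont {d : ℕ} {t : ℝ} : Continuous (gauss d t) := by
  unfold gauss
  exact continuous_const.mul (Real.continuous_exp.comp
    ((continuous_norm.pow 2).neg.div_const _))

lemma isOpen_cubeSet {d : ℕ} (c : Rd d) (r : ℝ) : IsOpen (cubeSet c r) := by
  have : cubeSet c r = ⋂ i, {y : Rd d | |c i - y i| < r} := by
    ext y; simp [cubeSet, Set.mem_iInter]
  rw [this]
  exact isOpen_iInter_of_finite fun i =>
    isOpen_lt (continuous_const.sub (by exact PiLp.continuous_apply _ _ i)).abs continuous_const

lemma measurableSet_cubeSet {d : ℕ} (c : Rd d) (r : ℝ) : MeasurableSet (cubeSet c r) :=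
  (isOpen_cubeSet c r).measurableSet

lemma integrableOn_gauss {d : ℕ} {t : ℝ} (ht : 0 < t) (w : Rd d) {S : Set (Rd d)}
    (hV : volume S ≠ ⊤) : IntegrableOn (fun y => gauss d t (w - y)) S := by
  have hc : Continuous fun y : Rd d => gauss d t (w - y) :=
    gauss_cont.comp (continuous_const.sub continuous_id)
  apply Measure.integrableOn_of_bounded hV hc.aestronglyMeasurable
    (M := (4 * Real.pi * t) ^ (-(d : ℝ) / 2))
  filter_upwards with a
  rw [Real.norm_eq_abs, abs_of_pos (gauss_pos ht _)]
  exact gauss_le ht _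

lemma setIntegral_Dn {d : ℕ} [NeZero d] (τ : ℝ) (n : ℕ) (g : Rd d → ℝ) :
    ∫ y in Dn d τ n, g y = ∫ y in Ck d n, g (y + (τ/n) • e1 d) := by
  have hC : MeasurableSet (Ck d n) := measurableSet_cubeSet _ _
  have hD : MeasurableSet (Dn d τ n) := measurableSet_cubeSet _ _
  rw [← integral_indicator hD, ← integral_indicator hC,
    ← integral_add_right_eq_self (fun y => (Dn d τ n).indicator g y) ((τ/n) • e1 d)]
  congr 1; funext y
  by_cases h : y ∈ Ck d n
  · rw [Set.indicator_of_mem ((mem_Dn_iff y).mpr h), Set.indicator_of_mem h]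
  · rw [Set.indicator_of_notMem (fun hc => h ((mem_Dn_iff y).mp hc)),
      Set.indicator_of_notMem h]

lemma equiv_symm_apply {d : ℕ} (y : Fin d → ℝ) (i : Fin d) :
    (MeasurableEquiv.toLp 2 (Fin d → ℝ)) y i = y i := rfl

lemma volume_cubeSet {d : ℕ} (c : Rd d) (r : ℝ) (hr : 0 ≤ r) :
    volume (cubeSet c r) = ENNReal.ofReal ((2 * r) ^ d) := by
  have e : MeasurePreserving (MeasurableEquiv.toLp 2 (Fin d → ℝ)) :=
    (EuclideanSpace.volume_preserving_symm_measurableEquiv_toLp (Fin d)).symm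
  have hpre : (⇑(MeasurableEquiv.toLp 2 (Fin d → ℝ))) ⁻¹' (cubeSet c r)
      = Set.univ.pi (fun i => Set.Ioo (c i - r) (c i + r)) := by
    ext y
    simp only [cubeSet, Set.mem_preimage, Set.mem_setOf_eq, Set.mem_pi, Set.mem_univ,
      Set.mem_Ioo, forall_true_left, equiv_symm_apply, abs_sub_lt_iff]
    constructor
    · intro h i; have := h i; constructor <;> linarith [this.1, this.2]
    · intro h i; have := h i; constructor <;> linarith [this.1, this.2]
  calc volume (cubeSet c r)
      = volume ((⇑(MeasurableEquiv.toLp 2 (Fin d → ℝ))) ⁻¹' (cubeSet c r)) := by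
        rw [e.measure_preimage ((measurableSet_cubeSet c r)).nullMeasurableSet]
    _ = ENNReal.ofReal ((2 * r) ^ d) := by
        rw [hpre, volume_pi_pi]
        simp only [Real.volume_Ioo]
        have : ∀ i : Fin d, ENNReal.ofReal (c i + r - (c i - r)) = ENNReal.ofReal (2 * r) := by
          intro i; congr 1; ring
        rw [Finset.prod_congr rfl (fun i _ => this i), Finset.prod_const,
          ← ENNReal.ofReal_pow (by linarith)]
        simp

lemma volume_cubeSet' {d : ℕ} (c : Rd d) (r : ℝ) (h : 0 ≤ r) : volume (cubeSet c r) ≠ ⊤ := by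
  rw [volume_cubeSet c r h]; exact ENNReal.ofReal_ne_top

lemma key_lower {d : ℕ} [NeZero d] {τ : ℝ} {n : ℕ} (hn : 1 ≤ n) (hτ : 1 ≤ τ)
    {t : ℝ} (ht : 0 < t) {x : Rd d} (hx : x 0 < (2:ℝ)^n) {μ : ℝ} (hμ : 1 ≤ μ) :
    (n:ℝ)^d * ((μ-1) * ∫ y in Ck d n, gauss d t (x - y)) ≤
      ∫ y, gauss d t (x - y) * aFun d τ n μ y := by
  set v := (τ/n) • e1 d with hv
  set g := fun y : Rd d => gauss d t (x - y) with hg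
  have hCmeas : MeasurableSet (Ck d n) := measurableSet_cubeSet _ _
  have hDmeas : MeasurableSet (Dn d τ n) := measurableSet_cubeSet _ _
  have hIC : IntegrableOn g (Ck d n) := integrableOn_gauss ht x (volume_cubeSet' _ _ (by positivity))
  have hID : IntegrableOn g (Dn d τ n) := integrableOn_gauss ht x (volume_cubeSet' _ _ (by positivity))
  have hIC' : IntegrableOn (fun y => g (y + v)) (Ck d n) := by
    have : (fun y : Rd d => g (y + v)) = fun y => gauss d t ((x - v) - y) := by
      funext y; simp only [hg]; congr 1; abel
    rw [this]; exact integrableOn_gauss ht _ (volume_cubeSet' _ _ (by positivity))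
  have step1 : ∫ y, gauss d t (x - y) * aFun d τ n μ y
      = (n:ℝ)^d * (μ * (∫ y in Ck d n, g y) - ∫ y in Dn d τ n, g y) := by
    have e : ∀ y, gauss d t (x - y) * aFun d τ n μ y
        = (n:ℝ)^d * (μ * (Ck d n).indicator g y - (Dn d τ n).indicator g y) := by
      intro y; unfold aFun
      by_cases h1 : y ∈ Ck d n <;> by_cases h2 : y ∈ Dn d τ n <;>
        simp [Set.indicator_of_mem, Set.indicator_of_notMem, h1, h2, hg] <;> ring
    calc ∫ y, gauss d t (x - y) * aFun d τ n μ y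
        = ∫ y, (n:ℝ)^d * (μ * (Ck d n).indicator g y - (Dn d τ n).indicator g y) := by
          simp_rw [e]
      _ = (n:ℝ)^d * ∫ y, (μ * (Ck d n).indicator g y - (Dn d τ n).indicator g y) :=
          integral_const_mul _ _
      _ = (n:ℝ)^d * (μ * (∫ y in Ck d n, g y) - ∫ y in Dn d τ n, g y) := by
          rw [integral_sub (((integrable_indicator_iff hCmeas).mpr hIC).const_mul μ)
            ((integrable_indicator_iff hDmeas).mpr hID),
            integral_const_mul, integral_indicator hCmeas, integral_indicator hDmeas]
  have step2 : ∫ y in Dn d τ n, g y ≤ ∫ y in Ck d n, g y := by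
    rw [setIntegral_Dn]
    apply setIntegral_mono_on hIC' hIC hCmeas
    intro y hy
    show gauss d t (x - (y + v)) ≤ gauss d t (x - y)
    have hxy : x - (y + v) = x - y - v := by abel
    rw [hxy]
    exact gauss_mono ht (norm_shift hn hτ hx hy)
  have step3 : 0 ≤ ∫ y in Ck d n, g y :=
    setIntegral_nonneg hCmeas (fun y _ => (gauss_pos ht _).le)
  rw [step1]
  have hnd : (0:ℝ) ≤ (n:ℝ)^d := by positivity
  have heta : (integral (volume.restrict (Ck d n)) g) = ∫ y in Ck d n, g y := rfl
  rw [heta]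
  nlinarith [mul_nonneg hnd (sub_nonneg.mpr step2)]

lemma norm_le_of_cube {d : ℕ} {c x : Rd d} {r : ℝ} (h : ∀ i, |c i - x i| < r)
    (hr : 0 ≤ r) : ‖x - c‖ ≤ Real.sqrt d * r := by
  rw [EuclideanSpace.norm_eq]
  have hb : ∀ i, ((x - c) i)^2 ≤ r^2 := by
    intro i
    have : |(x - c) i| ≤ r := by
      have := h i
      have h2 : (x - c) i = -(c i - x i) := by simp [PiLp.sub_apply]
      rw [h2, abs_neg]; exact this.le
    calc ((x - c) i)^2 = |(x - c) i|^2 := (sq_abs _).symm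
      _ ≤ r^2 := by nlinarith [abs_nonneg ((x-c) i)]
  calc Real.sqrt (∑ i, ‖(x - c) i‖^2) ≤ Real.sqrt (∑ _i : Fin d, r^2) := by
        apply Real.sqrt_le_sqrt
        apply Finset.sum_le_sum
        intro i _
        rw [Real.norm_eq_abs, sq_abs]
        exact hb i
    _ = Real.sqrt (d * r^2) := by rw [Finset.sum_const, Finset.card_univ]; simp [nsmul_eq_mul]
    _ = Real.sqrt d * r := by
        rw [Real.sqrt_mul (Nat.cast_nonneg d), Real.sqrt_sq hr]

lemma Ck_integral_lower {d : ℕ} [NeZero d] {n : ℕ} (hn : 1 ≤ n) {x : Rd d}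
    (hr : Real.sqrt d / n < ‖x - cn d n‖) :
    ((1:ℝ)/n)^d * ((4*Real.pi*‖x - cn d n‖^2)^(-(d:ℝ)/2) * Real.exp (-(9:ℝ)/16))
      ≤ ∫ y in Ck d n, gauss d (‖x - cn d n‖^2) (x - y) := by
  set r := ‖x - cn d n‖ with hrdef
  have hd0 : (0:ℝ) < d := by
    have := Nat.pos_of_ne_zero (NeZero.ne d); exact_mod_cast this
  have hnp : (0:ℝ) < n := by exact_mod_cast hn
  have hsd : (0:ℝ) < Real.sqrt d := Real.sqrt_pos.mpr hd0
  have hr0 : 0 < r := lt_trans (by positivity) hr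
  have ht : (0:ℝ) < r^2 := by positivity
  have hCmeas : MeasurableSet (Ck d n) := measurableSet_cubeSet _ _
  have hIC : IntegrableOn (fun y => gauss d (r^2) (x - y)) (Ck d n) :=
    integrableOn_gauss ht x (volume_cubeSet' _ _ (by positivity))
  have hlow : ∀ y ∈ Ck d n,
      (4*Real.pi*r^2)^(-(d:ℝ)/2) * Real.exp (-(9:ℝ)/16) ≤ gauss d (r^2) (x - y) := by
    intro y hy
    have hnorm : ‖x - y‖ ≤ 3*r/2 := by
      have h1 : ‖y - cn d n‖ ≤ Real.sqrt d * (1/(2*n)) :=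
        norm_le_of_cube hy (by positivity)
      have h2 : Real.sqrt d * (1/(2*n)) = (Real.sqrt d / n)/2 := by ring
      have h3 : ‖x - y‖ ≤ ‖x - cn d n‖ + ‖y - cn d n‖ := by
        have : x - y = (x - cn d n) - (y - cn d n) := by abel
        rw [this]; exact norm_sub_le _ _
      rw [h2] at h1
      rw [← hrdef] at h3
      linarith
    unfold gauss
    have h4 : (0:ℝ) < 4*Real.pi*r^2 := by positivity
    have hexp : Real.exp (-(9:ℝ)/16) ≤ Real.exp (-‖x - y‖^2 / (4*r^2)) := by
      apply Real.exp_le_exp.mpr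
      rw [show (-9:ℝ)/16 = -(9/16) by norm_num, neg_div, neg_le_neg_iff,
        div_le_iff₀ (by positivity : (0:ℝ) < 4*r^2)]
      nlinarith [norm_nonneg (x - y)]
    exact mul_le_mul_of_nonneg_left hexp (Real.rpow_pos_of_pos h4 _).le
  calc ((1:ℝ)/n)^d * ((4*Real.pi*r^2)^(-(d:ℝ)/2) * Real.exp (-(9:ℝ)/16))
      = ∫ _y in Ck d n, ((4*Real.pi*r^2)^(-(d:ℝ)/2) * Real.exp (-(9:ℝ)/16)) := by
        rw [setIntegral_const]
        rw [show Ck d n = cubeSet (cn d n) (1/(2*n)) from rfl, measureReal_def, volume_cubeSet _ _ (by positivity)]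
        rw [ENNReal.toReal_ofReal (by positivity)]
        rw [smul_eq_mul]
        congr 1
        rw [show (2 * (1/(2*(n:ℝ)))) = 1/n by field_simp]
    _ ≤ ∫ y in Ck d n, gauss d (r^2) (x - y) := by
        apply setIntegral_mono_on (Iff.mpr (integrableOn_const_iff
          (C := (4*Real.pi*r^2)^(-(d:ℝ)/2) * Real.exp (-(9:ℝ)/16))) ?_) hIC hCmeas hlow
        right
        rw [show Ck d n = cubeSet (cn d n) (1/(2*n)) from rfl, volume_cubeSet _ _ (by positivity)]
        exact ENNReal.ofReal_lt_top

def Ek (d : ℕ) [NeZero d] (n k : ℕ) : Set (Rd d) :=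
  cubeSet (cn d n - ((3/4) * (1/2:ℝ)^k) • e1 d) ((1/2:ℝ)^k * (1/(4*(d:ℝ))))

lemma Ek_props {d : ℕ} [NeZero d] (hd : 3 ≤ d) {n k : ℕ} {x : Rd d}
    (hx : x ∈ Ek d n k) :
    (1/2:ℝ)^k/2 < ‖x - cn d n‖ ∧ ‖x - cn d n‖ < (1/2:ℝ)^k ∧ x 0 < (2:ℝ)^n := by
  set ρ : ℝ := (1/2:ℝ)^k with hρdef
  have hρ : 0 < ρ := by positivity
  have hd0 : (0:ℝ) < d := by exact_mod_cast Nat.lt_of_lt_of_le (by norm_num) hd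
  have hd3 : (3:ℝ) ≤ d := by exact_mod_cast hd
  have hsd : 1 < Real.sqrt d := by
    rw [show (1:ℝ) = Real.sqrt 1 from (Real.sqrt_one).symm]
    exact Real.sqrt_lt_sqrt (by norm_num) (by linarith)
  set cc : Rd d := cn d n - ((3/4) * ρ) • e1 d with hccdef
  have h1 : ‖x - cc‖ ≤ Real.sqrt d * (ρ * (1/(4*(d:ℝ)))) :=
    norm_le_of_cube hx (by positivity)
  have hsdd : Real.sqrt d * (1/(4*(d:ℝ))) < 1/4 := by
    have h2 : Real.sqrt d < d := by
      nlinarith [Real.sq_sqrt hd0.le, Real.sqrt_nonneg (d:ℝ)]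
    have h3 : Real.sqrt d * (1/(4*(d:ℝ))) < (d:ℝ) * (1/(4*(d:ℝ))) :=
      mul_lt_mul_of_pos_right h2 (by positivity)
    have h4 : (d:ℝ) * (1/(4*(d:ℝ))) = 1/4 := by field_simp
    linarith
  have hxc : ‖x - cc‖ < ρ/4 := by
    have : Real.sqrt d * (ρ * (1/(4*(d:ℝ)))) = (Real.sqrt d * (1/(4*(d:ℝ)))) * ρ := by ring
    rw [this] at h1
    nlinarith
  have hw : ‖((3/4) * ρ) • e1 d‖ = (3/4) * ρ := by
    rw [norm_smul, norm_e1, mul_one, Real.norm_eq_abs, abs_of_pos (by positivity)]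
  have hdecomp : x - cn d n = (x - cc) - ((3/4) * ρ) • e1 d := by
    rw [hccdef]; abel
  constructor
  · have h5 : ‖((3/4) * ρ) • e1 d‖ ≤ ‖x - cc‖ + ‖(x - cc) - ((3/4) * ρ) • e1 d‖ := by
      calc ‖((3/4) * ρ) • e1 d‖ = ‖(x - cc) - ((x - cc) - ((3/4) * ρ) • e1 d)‖ := by
            congr 1; abel
        _ ≤ ‖x - cc‖ + ‖(x - cc) - ((3/4) * ρ) • e1 d‖ := norm_sub_le _ _
    rw [hw] at h5
    rw [hdecomp]
    linarith
  constructor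
  · rw [hdecomp]
    calc ‖(x - cc) - ((3/4) * ρ) • e1 d‖ ≤ ‖x - cc‖ + ‖((3/4) * ρ) • e1 d‖ :=
          norm_sub_le _ _
      _ < ρ/4 + (3/4)*ρ := by rw [hw]; linarith
      _ = ρ := by ring
  · have h0 : |(cn d n - ((3/4) * ρ) • e1 d) 0 - x 0| < ρ * (1/(4*(d:ℝ))) := hx 0
    have hcc0 : (cn d n - ((3/4) * ρ) • e1 d) 0 = (2:ℝ)^n - (3/4) * ρ := by
      have h5 : (cn d n - ((3/4) * ρ) • e1 d) 0 = cn d n 0 - (((3/4) * ρ) • e1 d) 0 := rfl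
      rw [h5, cn_apply_zero, smul_e1_apply]
      simp
    rw [hcc0] at h0
    have h6 := (abs_lt.mp h0).1
    have hde : ρ * (1/(4*(d:ℝ))) ≤ ρ/4 := by
      have h7 : (1:ℝ)/(4*(d:ℝ)) ≤ 1/4 := by
        rw [div_le_div_iff₀ (by positivity) (by norm_num)]; linarith
      nlinarith
    nlinarith

lemma shell_const {d : ℕ} {ρ ε : ℝ} (hρ : 0 < ρ) (hε : 0 < ε) :
    (4*Real.pi*ρ^2)^(-(d:ℝ)/2) * Real.exp (-(9:ℝ)/16) * (2*ρ*ε)^d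
    = (4*Real.pi)^(-(d:ℝ)/2) * Real.exp (-(9:ℝ)/16) * (2*ε)^d := by
  have hπ : (0:ℝ) < 4*Real.pi := by positivity
  have h1 : (4*Real.pi*ρ^2)^(-(d:ℝ)/2)
      = (4*Real.pi)^(-(d:ℝ)/2) * (ρ^2)^(-(d:ℝ)/2) := by
    rw [Real.mul_rpow hπ.le (by positivity)]
  have h2 : ((ρ^2:ℝ))^(-(d:ℝ)/2) = ρ ^ (-(d:ℝ)) := by
    rw [show (ρ^2:ℝ) = ρ ^ ((2:ℕ):ℝ) from (Real.rpow_natCast ρ 2).symm,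
      ← Real.rpow_mul hρ.le, show (2:ℕ) * (-(d:ℝ)/2) = -(d:ℝ) by push_cast; ring]
  have h3 : (2*ρ*ε)^d = ρ^(d:ℕ) * (2*ε)^d := by
    rw [show (2*ρ*ε) = ρ * (2*ε) by ring, mul_pow]
  have h4 : ρ ^ (-(d:ℝ)) * ρ^(d:ℕ) = 1 := by
    rw [show (ρ^(d:ℕ) : ℝ) = ρ ^ ((d:ℕ):ℝ) from (Real.rpow_natCast ρ d).symm,
      ← Real.rpow_add hρ]
    norm_num
  rw [h1, h2, h3]
  calc (4*Real.pi)^(-(d:ℝ)/2) * ρ ^ (-(d:ℝ)) * Real.exp (-(9:ℝ)/16) * (ρ^(d:ℕ) * (2*ε)^d)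
      = (4*Real.pi)^(-(d:ℝ)/2) * Real.exp (-(9:ℝ)/16) * (2*ε)^d * (ρ ^ (-(d:ℝ)) * ρ^(d:ℕ)) := by
        ring
    _ = (4*Real.pi)^(-(d:ℝ)/2) * Real.exp (-(9:ℝ)/16) * (2*ε)^d := by rw [h4, mul_one]

lemma Ek_disjoint {d : ℕ} [NeZero d] (hd : 3 ≤ d) (n : ℕ) {j k : ℕ} (hjk : j ≠ k) :
    Disjoint (Ek d n j) (Ek d n k) := by
  wlog h : j < k generalizing j k
  · exact (this hjk.symm (by omega)).symm
  rw [Set.disjoint_left]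
  intro x hxj hxk
  obtain ⟨hj1, hj2, _⟩ := Ek_props hd hxj
  obtain ⟨hk1, hk2, _⟩ := Ek_props hd hxk
  have : ((1:ℝ)/2)^k ≤ ((1:ℝ)/2)^(j+1) :=
    pow_le_pow_of_le_one (by norm_num) (by norm_num) (by omega)
  have h2 : ((1:ℝ)/2)^(j+1) = ((1:ℝ)/2)^j/2 := by rw [pow_succ]; ring
  linarith

lemma sqrtd_le {d : ℕ} (hd : 3 ≤ d) : Real.sqrt d ≤ (2:ℝ)^(d-1) := by
  have h1 : Real.sqrt d ≤ (d:ℝ) := by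
    have h0 : (1:ℝ) ≤ (d:ℝ) := by
      have : (3:ℝ) ≤ (d:ℝ) := by exact_mod_cast hd
      linarith
    have := Real.sqrt_le_sqrt (by nlinarith : (d:ℝ) ≤ (d:ℝ)^2)
    rwa [Real.sqrt_sq (by positivity)] at this
  have h2 : (d:ℝ) ≤ (2:ℝ)^(d-1) := by
    have := Nat.lt_two_pow_self (n := d-1)
    have h3 : d ≤ 2^(d-1) := by omega
    calc (d:ℝ) ≤ ((2^(d-1) : ℕ) : ℝ) := by exact_mod_cast h3
      _ = (2:ℝ)^(d-1) := by push_cast; ring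
  linarith


/-- for every `τ > 3` there are `c > 0` and `N`, depending only on `d` and
`τ`, such that for every `n ≥ N` and every `μ ≥ 1`, with `a_n = n^d (μ χ_{C_n} - χ_{D_n})`,
`∫_{S_n} sup_{0 < t ≤ 1} (P_t * a_n)(x) dx ≥ c (μ-1) ln n`. -/
theorem statement12 (d : ℕ) [NeZero d] (hd : 3 ≤ d) (τ : ℝ) (hτ : 3 < τ) :
    ∃ c > (0 : ℝ), ∃ N : ℕ, ∀ n : ℕ, N ≤ n → ∀ μ : ℝ, 1 ≤ μ →
      ENNReal.ofReal (c * (μ - 1) * Real.log n) ≤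
        ∫⁻ x in Sn d n, ⨆ t ∈ Set.Ioc (0 : ℝ) 1,
          ENNReal.ofReal (∫ y, gauss d t (x - y) * aFun d τ n μ y) := by

  have hd0 : (0:ℝ) < d := by
    have : 0 < d := by omega
    exact_mod_cast this
  have hτ1 : (1:ℝ) ≤ τ := by linarith
  have hπpos := Real.rpow_pos_of_pos (show (0:ℝ) < 4*Real.pi by positivity) (-(d:ℝ)/2)
  set ε : ℝ := 1/(4*(d:ℝ)) with hεdef
  have hεpos : 0 < ε := by positivity
  set c₁ : ℝ := (4*Real.pi)^(-(d:ℝ)/2) * Real.exp (-(9:ℝ)/16) * (2*ε)^d with hc₁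
  have hc₁pos : 0 < c₁ := by positivity
  have hlog2 : (0:ℝ) < Real.log 2 := Real.log_pos (by norm_num)
  refine ⟨c₁ / (4*Real.log 2), by positivity, 4^(d+1), ?_⟩
  intro n hn μ hμ
  have hμ0 : 0 ≤ μ - 1 := by linarith
  have hn1 : 1 ≤ n := le_trans (Nat.one_le_pow _ _ (by norm_num)) hn
  have hnR : (1:ℝ) ≤ (n:ℝ) := by exact_mod_cast hn1
  have hnpos : (0:ℝ) < n := by linarith
  set L : ℕ := Nat.log 2 n with hLdef
  set K : ℕ := L - d with hKdef
  have hL2 : 2*(d+1) ≤ L := by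
    have h1 : (2:ℕ)^(2*(d+1)) = 4^(d+1) := by rw [pow_mul]; norm_num
    have h2 : Nat.log 2 (2^(2*(d+1))) = 2*(d+1) := Nat.log_pow (by norm_num) _
    calc 2*(d+1) = Nat.log 2 (2^(2*(d+1))) := h2.symm
      _ ≤ L := by apply Nat.log_mono_right; rw [h1]; exact hn
  have hKd : K + d = L := by omega
  have h2L : (2:ℕ)^L ≤ n := Nat.pow_log_le_self 2 (by omega)
  have hrad : ∀ k, 1 ≤ k → k ≤ K → Real.sqrt d / n ≤ ((1:ℝ)/2)^k / 2 := by
    intro k hk1 hk2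
    have hpow : ((2:ℝ))^(k+1) * Real.sqrt d ≤ n := by
      have e1 : Real.sqrt d ≤ (2:ℝ)^(d-1) := sqrtd_le hd
      have e2 : ((2:ℝ))^(k+1) * (2:ℝ)^(d-1) = (2:ℝ)^(k+d) := by
        rw [← pow_add]; congr 1; omega
      have e3 : ((2:ℕ))^(k+d) ≤ (2:ℕ)^L := Nat.pow_le_pow_right (by norm_num) (by omega)
      have e4 : ((2:ℝ))^(k+d) ≤ (n:ℝ) := by
        calc ((2:ℝ))^(k+d) = (((2:ℕ)^(k+d) : ℕ) : ℝ) := by push_cast; ring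
          _ ≤ (n:ℝ) := by exact_mod_cast le_trans e3 h2L
      calc (2:ℝ)^(k+1) * Real.sqrt d ≤ (2:ℝ)^(k+1) * (2:ℝ)^(d-1) :=
            mul_le_mul_of_nonneg_left e1 (by positivity)
        _ = (2:ℝ)^(k+d) := e2
        _ ≤ n := e4
    have hhalf : ((1:ℝ)/2)^k = 1/(2:ℝ)^k := by rw [div_pow, one_pow]
    rw [hhalf, div_div, div_le_div_iff₀ hnpos (by positivity), one_mul]
    calc Real.sqrt d * ((2:ℝ)^k * 2) = (2:ℝ)^(k+1) * Real.sqrt d := by rw [pow_succ]; ring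
      _ ≤ n := hpow
  -- per-shell lower bound
  have shell : ∀ k, 1 ≤ k → k ≤ K →
      ENNReal.ofReal ((μ-1) * c₁) ≤ ∫⁻ x in Ek d n k, ⨆ t ∈ Set.Ioc (0:ℝ) 1,
        ENNReal.ofReal (∫ y, gauss d t (x - y) * aFun d τ n μ y) := by
    intro k hk1 hk2
    set ρ : ℝ := ((1:ℝ)/2)^k with hρdef
    have hρpos : 0 < ρ := by positivity
    have hρhalf : ρ ≤ 1/2 := by
      calc ρ ≤ ((1:ℝ)/2)^1 := pow_le_pow_of_le_one (by norm_num) (by norm_num) hk1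
        _ = 1/2 := pow_one _
    set Bk : ℝ := (4*Real.pi*ρ^2)^(-(d:ℝ)/2) * Real.exp (-(9:ℝ)/16) with hBk
    have hBkpos : 0 < Bk := by
      have := Real.rpow_pos_of_pos (show (0:ℝ) < 4*Real.pi*ρ^2 by positivity) (-(d:ℝ)/2)
      positivity
    have hpt : ∀ x ∈ Ek d n k, ENNReal.ofReal ((μ-1) * Bk) ≤
        ⨆ t ∈ Set.Ioc (0:ℝ) 1,
          ENNReal.ofReal (∫ y, gauss d t (x - y) * aFun d τ n μ y) := by
      intro x hx
      obtain ⟨hx1, hx2, hx3⟩ := Ek_props hd hx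
      set r : ℝ := ‖x - cn d n‖ with hrdef
      have hr0 : 0 < r := lt_trans (by positivity) hx1
      have hrd : Real.sqrt d / n < r := lt_of_le_of_lt (hrad k hk1 hk2) hx1
      have htmem : r^2 ∈ Set.Ioc (0:ℝ) 1 := by
        constructor
        · positivity
        · nlinarith
      have hreal : (μ-1) * Bk ≤ ∫ y, gauss d (r^2) (x - y) * aFun d τ n μ y := by
        have hkey := key_lower hn1 hτ1 (by positivity : (0:ℝ) < r^2) hx3 hμ
        have hck := Ck_integral_lower hn1 hrd
        have hmul : (n:ℝ)^d * ((μ-1) * (((1:ℝ)/n)^d *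
            ((4*Real.pi*r^2)^(-(d:ℝ)/2) * Real.exp (-(9:ℝ)/16))))
            ≤ (n:ℝ)^d * ((μ-1) * ∫ y in Ck d n, gauss d (r^2) (x - y)) := by
          apply mul_le_mul_of_nonneg_left _ (by positivity)
          exact mul_le_mul_of_nonneg_left hck hμ0
        have hone : (n:ℝ)^d * ((1:ℝ)/n)^d = 1 := by
          rw [← mul_pow, mul_one_div, div_self (ne_of_gt hnpos), one_pow]
        set Er : ℝ := (4*Real.pi*r^2)^(-(d:ℝ)/2) * Real.exp (-(9:ℝ)/16) with hErdef
        have hBr : Bk ≤ Er := by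
          have hsq : r^2 ≤ ρ^2 := by nlinarith [hr0.le, hx2.le]
          have hbase : 4*Real.pi*r^2 ≤ 4*Real.pi*ρ^2 := by
            have hπ2 : (0:ℝ) ≤ 4*Real.pi := by positivity
            calc 4*Real.pi*r^2 = (4*Real.pi)*r^2 := by ring
              _ ≤ (4*Real.pi)*ρ^2 := mul_le_mul_of_nonneg_left hsq hπ2
              _ = 4*Real.pi*ρ^2 := by ring
          apply mul_le_mul_of_nonneg_right _ (Real.exp_pos _).le
          exact Real.rpow_le_rpow_of_nonpos (by positivity) hbase (by linarith)
        calc (μ-1) * Bk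
            ≤ (μ-1) * Er := mul_le_mul_of_nonneg_left hBr hμ0
          _ = (n:ℝ)^d * ((μ-1) * (((1:ℝ)/n)^d * Er)) := by
              rw [show (n:ℝ)^d * ((μ-1) * (((1:ℝ)/n)^d * Er)) =
                ((n:ℝ)^d * ((1:ℝ)/n)^d) * ((μ-1) * Er) from by ring, hone, one_mul]
          _ ≤ (n:ℝ)^d * ((μ-1) * ∫ y in Ck d n, gauss d (r^2) (x - y)) := hmul
          _ ≤ ∫ y, gauss d (r^2) (x - y) * aFun d τ n μ y := hkey
      calc ENNReal.ofReal ((μ-1) * Bk)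
          ≤ ENNReal.ofReal (∫ y, gauss d (r^2) (x - y) * aFun d τ n μ y) :=
            ENNReal.ofReal_le_ofReal hreal
        _ ≤ ⨆ t ∈ Set.Ioc (0:ℝ) 1,
            ENNReal.ofReal (∫ y, gauss d t (x - y) * aFun d τ n μ y) :=
            le_biSup (fun t => ENNReal.ofReal (∫ y, gauss d t (x - y) * aFun d τ n μ y)) htmem
    have hvol : volume (Ek d n k) = ENNReal.ofReal ((2*ρ*ε)^d) := by
      rw [show Ek d n k = cubeSet (cn d n - ((3/4) * ρ) • e1 d) (ρ * ε) from rfl,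
        volume_cubeSet _ _ (by positivity)]
      congr 1; ring
    calc ENNReal.ofReal ((μ-1) * c₁)
        = ENNReal.ofReal ((μ-1) * Bk) * volume (Ek d n k) := by
          rw [hvol, ← ENNReal.ofReal_mul (by positivity)]
          congr 1
          rw [hc₁, hBk, ← shell_const hρpos hεpos]
          ring
      _ = ∫⁻ _x in Ek d n k, ENNReal.ofReal ((μ-1) * Bk) := (setLIntegral_const _ _).symm
      _ ≤ ∫⁻ x in Ek d n k, ⨆ t ∈ Set.Ioc (0:ℝ) 1,
          ENNReal.ofReal (∫ y, gauss d t (x - y) * aFun d τ n μ y) :=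
          setLIntegral_mono' (measurableSet_cubeSet _ _) hpt
  -- union of shells
  have hsub : (⋃ k ∈ Finset.Icc 1 K, Ek d n k) ⊆ Sn d n := by
    intro x hx
    simp only [Set.mem_iUnion] at hx
    obtain ⟨k, hk, hxk⟩ := hx
    obtain ⟨hk1, hk2⟩ := Finset.mem_Icc.mp hk
    obtain ⟨hx1, hx2, hx3⟩ := Ek_props hd hxk
    have hρhalf : ((1:ℝ)/2)^k ≤ 1/2 := by
      calc ((1:ℝ)/2)^k ≤ ((1:ℝ)/2)^1 := pow_le_pow_of_le_one (by norm_num) (by norm_num) hk1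
        _ = 1/2 := pow_one _
    exact ⟨lt_of_le_of_lt (hrad k hk1 hk2) hx1, by linarith, hx3⟩
  have hdisj : (↑(Finset.Icc 1 K) : Set ℕ).PairwiseDisjoint (Ek d n ·) := by
    intro j _ k _ hjk
    exact Ek_disjoint hd n hjk
  calc ENNReal.ofReal (c₁ / (4*Real.log 2) * (μ - 1) * Real.log n)
      ≤ (K : ℝ≥0∞) * ENNReal.ofReal ((μ-1) * c₁) := by
        rw [← ENNReal.ofReal_natCast K, ← ENNReal.ofReal_mul (by positivity)]
        apply ENNReal.ofReal_le_ofReal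
        have hlogn : Real.log n ≤ ((L:ℝ)+1) * Real.log 2 := by
          have h5 : (n:ℝ) < (2:ℝ)^(L+1) := by
            exact_mod_cast Nat.lt_pow_succ_log_self (by norm_num) n
          calc Real.log n ≤ Real.log ((2:ℝ)^(L+1)) :=
                Real.log_le_log (by positivity) h5.le
            _ = ((L:ℝ)+1) * Real.log 2 := by rw [Real.log_pow]; push_cast; ring
        have hKL : ((L:ℝ)+1) ≤ 4*(K:ℝ) := by
          have : (K:ℝ) + (d:ℝ) = (L:ℝ) := by exact_mod_cast hKd
          have hL2' : 2*((d:ℝ)+1) ≤ (L:ℝ) := by exact_mod_cast hL2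
          linarith
        have h8 : Real.log n ≤ (K:ℝ) * (4*Real.log 2) := by nlinarith
        have hlogn0 : 0 ≤ Real.log n := Real.log_nonneg hnR
        rw [div_mul_eq_mul_div, div_mul_eq_mul_div, div_le_iff₀ (by positivity)]
        nlinarith [mul_le_mul_of_nonneg_left h8 (mul_nonneg hc₁pos.le hμ0)]
    _ = ∑ k ∈ Finset.Icc 1 K, ENNReal.ofReal ((μ-1) * c₁) := by
        rw [Finset.sum_const, Nat.card_Icc]
        simp [nsmul_eq_mul]
    _ ≤ ∑ k ∈ Finset.Icc 1 K, ∫⁻ x in Ek d n k, ⨆ t ∈ Set.Ioc (0:ℝ) 1,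
          ENNReal.ofReal (∫ y, gauss d t (x - y) * aFun d τ n μ y) := by
        apply Finset.sum_le_sum
        intro k hk
        obtain ⟨hk1, hk2⟩ := Finset.mem_Icc.mp hk
        exact shell k hk1 hk2
    _ = ∫⁻ x in ⋃ k ∈ Finset.Icc 1 K, Ek d n k, ⨆ t ∈ Set.Ioc (0:ℝ) 1,
          ENNReal.ofReal (∫ y, gauss d t (x - y) * aFun d τ n μ y) :=
        (lintegral_biUnion_finset hdisj (fun k _ => measurableSet_cubeSet _ _) _).symm
    _ ≤ ∫⁻ x in Sn d n, ⨆ t ∈ Set.Ioc (0:ℝ) 1,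
          ENNReal.ofReal (∫ y, gauss d t (x - y) * aFun d τ n μ y) :=
        lintegral_mono_set hsub
end
end
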